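/- The counterfactual-arm bound functions are cumulative distribution functions: assume overlap and 0 < c̲ ≤ p₁ ≤ c̄ < 1. Then each of the four functions F̄₁⁰, F̲₁⁰, F̄₀¹, F̲₀¹ is nondecreasing, right-continuous, tends to 0 as y → −∞, and tends to 1 as y → +∞. -/

import Mathlib

open MeasureTheory ProbabilityTheory Set Filter Function Topology

noncomputable section

lemma auxG {Ω : Type*} [MeasurableSpace Ω] (P : Measure Ω) [IsProbabilityMeasure P]
    (Y : Ω → ℝ) (hYm : Measurable Y) (A : Set Ω) (hA : MeasurableSet A)
    (p : ℝ) (hp : p = (P A).toReal) (hppos : 0 < p)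
    (G : ℝ → ℝ) (hG : ∀ y, G y = (P {ω | Y ω ≤ y ∧ ω ∈ A}).toReal / p) :
    Monotone G ∧ (∀ y, ContinuousWithinAt G (Set.Ici y) y) ∧
      Tendsto G atBot (𝓝 0) ∧ Tendsto G atTop (𝓝 1) := by
  set ν := Measure.map Y (P.restrict A) with hν
  have hν_apply : ∀ y, ν (Iic y) = P {ω | Y ω ≤ y ∧ ω ∈ A} := by
    intro y
    rw [hν, Measure.map_apply hYm measurableSet_Iic,
      Measure.restrict_apply (hYm measurableSet_Iic)]
    congr 1
  set c := P A with hc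
  have hcne0 : c ≠ 0 := by
    intro h
    rw [hp, h] at hppos
    simp at hppos
  have hcnetop : c ≠ ⊤ := measure_ne_top P A
  set μ := c⁻¹ • ν with hμ
  have hνuniv : ν univ = c := by
    rw [hν, Measure.map_apply hYm MeasurableSet.univ]
    simp [Measure.restrict_apply MeasurableSet.univ, hc]
  haveI : IsProbabilityMeasure μ := by
    constructor
    rw [hμ, Measure.smul_apply, hνuniv, smul_eq_mul, ENNReal.inv_mul_cancel hcne0 hcnetop]
  have hGeq : G = fun y => cdf μ y := by
    funext y
    rw [hG, cdf_eq_real, measureReal_def, hμ, Measure.smul_apply, smul_eq_mul, ENNReal.toReal_mul,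
      ENNReal.toReal_inv, hν_apply, hp]
    ring
  rw [hGeq]
  exact ⟨(cdf μ).mono, fun y => (cdf μ).right_continuous y, tendsto_cdf_atBot μ,
    tendsto_cdf_atTop μ⟩

lemma auxMin (G F : ℝ → ℝ) (a1 b1 a2 b2 : ℝ) (hb1 : 0 ≤ b1) (hb2 : 0 ≤ b2)
    (hGm : Monotone G) (hGrc : ∀ y, ContinuousWithinAt G (Set.Ici y) y)
    (hG0 : Tendsto G atBot (𝓝 0)) (hG1 : Tendsto G atTop (𝓝 1))
    (hF : ∀ y, F y = min (a1 + b1 * G y) (a2 + b2 * G y))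
    (hbot : min a1 a2 = 0) (htop : min (a1 + b1) (a2 + b2) = 1) :
    Monotone F ∧ (∀ y, ContinuousWithinAt F (Set.Ici y) y) ∧
      Tendsto F atBot (𝓝 0) ∧ Tendsto F atTop (𝓝 1) := by
  have hFeq : F = fun y => min (a1 + b1 * G y) (a2 + b2 * G y) := funext hF
  rw [hFeq]
  refine ⟨?_, ?_, ?_, ?_⟩
  · intro x y h
    exact min_le_min (by nlinarith [hGm h]) (by nlinarith [hGm h])
  · intro y
    exact (continuousWithinAt_const.add (continuousWithinAt_const.mul (hGrc y))).min
      (continuousWithinAt_const.add (continuousWithinAt_const.mul (hGrc y)))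
  · have h : Tendsto (fun y => min (a1 + b1 * G y) (a2 + b2 * G y)) atBot
        (𝓝 (min (a1 + b1 * 0) (a2 + b2 * 0))) :=
      (tendsto_const_nhds.add (hG0.const_mul b1)).min
        (tendsto_const_nhds.add (hG0.const_mul b2))
    simpa [hbot] using h
  · have h : Tendsto (fun y => min (a1 + b1 * G y) (a2 + b2 * G y)) atTop
        (𝓝 (min (a1 + b1 * 1) (a2 + b2 * 1))) :=
      (tendsto_const_nhds.add (hG1.const_mul b1)).min
        (tendsto_const_nhds.add (hG1.const_mul b2))
    simpa [htop] using h

lemma auxMax (G F : ℝ → ℝ) (a1 b1 a2 b2 : ℝ) (hb1 : 0 ≤ b1) (hb2 : 0 ≤ b2)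
    (hGm : Monotone G) (hGrc : ∀ y, ContinuousWithinAt G (Set.Ici y) y)
    (hG0 : Tendsto G atBot (𝓝 0)) (hG1 : Tendsto G atTop (𝓝 1))
    (hF : ∀ y, F y = max (a1 + b1 * G y) (a2 + b2 * G y))
    (hbot : max a1 a2 = 0) (htop : max (a1 + b1) (a2 + b2) = 1) :
    Monotone F ∧ (∀ y, ContinuousWithinAt F (Set.Ici y) y) ∧
      Tendsto F atBot (𝓝 0) ∧ Tendsto F atTop (𝓝 1) := by
  have hFeq : F = fun y => max (a1 + b1 * G y) (a2 + b2 * G y) := funext hF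
  rw [hFeq]
  refine ⟨?_, ?_, ?_, ?_⟩
  · intro x y h
    exact max_le_max (by nlinarith [hGm h]) (by nlinarith [hGm h])
  · intro y
    exact (continuousWithinAt_const.add (continuousWithinAt_const.mul (hGrc y))).max
      (continuousWithinAt_const.add (continuousWithinAt_const.mul (hGrc y)))
  · have h : Tendsto (fun y => max (a1 + b1 * G y) (a2 + b2 * G y)) atBot
        (𝓝 (max (a1 + b1 * 0) (a2 + b2 * 0))) :=
      (tendsto_const_nhds.add (hG0.const_mul b1)).max
        (tendsto_const_nhds.add (hG0.const_mul b2))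
    simpa [hbot] using h
  · have h : Tendsto (fun y => max (a1 + b1 * G y) (a2 + b2 * G y)) atTop
        (𝓝 (max (a1 + b1 * 1) (a2 + b2 * 1))) :=
      (tendsto_const_nhds.add (hG1.const_mul b1)).max
        (tendsto_const_nhds.add (hG1.const_mul b2))
    simpa [htop] using h


/-- **The counterfactual-arm bound functions are cdfs.**
Under overlap and `0 < c̲ ≤ p₁ ≤ c̄ < 1`, each of the four counterfactual-arm bound functions
`F̄₁⁰, F̲₁⁰, F̄₀¹, F̲₀¹` is nondecreasing, right-continuous, tends to `0` at `−∞` and to `1`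
at `+∞`. -/
theorem counterfactual_arm_bounds_are_cdfs
    {Ω : Type*} [MeasurableSpace Ω] (P : Measure Ω) [IsProbabilityMeasure P]
    (Y1 Y0 : Ω → ℝ) (X : Ω → Bool)
    (hY1 : Measurable Y1) (hY0 : Measurable Y0) (hX : Measurable X)
    (Y : Ω → ℝ) (hY : ∀ ω, Y ω = if X ω then Y1 ω else Y0 ω)
    (p1 p0 : ℝ) (hp1 : p1 = (P {ω | X ω = true}).toReal) (hp0 : p0 = 1 - p1)
    (hov : 0 < p1 ∧ p1 < 1)
    (cl cu : ℝ) (hcl : 0 < cl) (hclp1 : cl ≤ p1) (hp1cu : p1 ≤ cu) (hcu : cu < 1)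
    (G1 G0 : ℝ → ℝ)
    (hG1 : ∀ y, G1 y = (P {ω | Y ω ≤ y ∧ X ω = true}).toReal / p1)
    (hG0 : ∀ y, G0 y = (P {ω | Y ω ≤ y ∧ X ω = false}).toReal / p0)
    (Fu10 Fl10 Fu01 Fl01 : ℝ → ℝ)
    (hFu10 : ∀ y, Fu10 y = min (G1 y * p1 * (1 - cl) / (p0 * cl))
      ((cu - p1) / (cu * p0) + G1 y * p1 * (1 - cu) / (p0 * cu)))
    (hFl10 : ∀ y, Fl10 y = max (G1 y * p1 * (1 - cu) / (p0 * cu))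
      ((cl - p1) / (cl * p0) + G1 y * p1 * (1 - cl) / (p0 * cl)))
    (hFu01 : ∀ y, Fu01 y = min (G0 y * p0 * cu / (p1 * (1 - cu)))
      ((p1 - cl) / ((1 - cl) * p1) + G0 y * p0 * cl / (p1 * (1 - cl))))
    (hFl01 : ∀ y, Fl01 y = max (G0 y * p0 * cl / (p1 * (1 - cl)))
      ((p1 - cu) / ((1 - cu) * p1) + G0 y * p0 * cu / (p1 * (1 - cu)))) :
    (Monotone Fu10 ∧ (∀ y : ℝ, ContinuousWithinAt Fu10 (Set.Ici y) y) ∧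
      Tendsto Fu10 atBot (𝓝 0) ∧ Tendsto Fu10 atTop (𝓝 1)) ∧
    (Monotone Fl10 ∧ (∀ y : ℝ, ContinuousWithinAt Fl10 (Set.Ici y) y) ∧
      Tendsto Fl10 atBot (𝓝 0) ∧ Tendsto Fl10 atTop (𝓝 1)) ∧
    (Monotone Fu01 ∧ (∀ y : ℝ, ContinuousWithinAt Fu01 (Set.Ici y) y) ∧
      Tendsto Fu01 atBot (𝓝 0) ∧ Tendsto Fu01 atTop (𝓝 1)) ∧
    (Monotone Fl01 ∧ (∀ y : ℝ, ContinuousWithinAt Fl01 (Set.Ici y) y) ∧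
      Tendsto Fl01 atBot (𝓝 0) ∧ Tendsto Fl01 atTop (𝓝 1)) := by
  obtain ⟨hp1pos, hp1lt⟩ := hov
  subst hp0
  have hp0pos : (0:ℝ) < 1 - p1 := by linarith
  have hcupos : (0:ℝ) < cu := lt_of_lt_of_le hp1pos hp1cu
  have h1cl : (0:ℝ) < 1 - cl := by linarith
  have h1cu : (0:ℝ) < 1 - cu := by linarith
  have hYm : Measurable Y := by
    have hYe : Y = fun ω => if X ω then Y1 ω else Y0 ω := funext hY
    rw [hYe]
    exact Measurable.ite (hX (measurableSet_singleton true)) hY1 hY0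
  -- G1 properties
  obtain ⟨hG1m, hG1rc, hG1b, hG1t⟩ := auxG P Y hYm {ω | X ω = true}
    (hX (measurableSet_singleton true)) p1 hp1 hp1pos G1 hG1
  -- G0 properties
  have hAc : {ω | X ω = false} = {ω | X ω = true}ᶜ := by ext ω; simp
  have hp0m : 1 - p1 = (P {ω | X ω = false}).toReal := by
    rw [hAc, prob_compl_eq_one_sub
      (show MeasurableSet {ω | X ω = true} from hX (measurableSet_singleton true)),
      ENNReal.toReal_sub_of_le prob_le_one ENNReal.one_ne_top, hp1]
    simp
  obtain ⟨hG0m, hG0rc, hG0b, hG0t⟩ := auxG P Y hYm {ω | X ω = false}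
    (hX (measurableSet_singleton false)) (1 - p1) hp0m hp0pos G0 hG0
  refine ⟨?_, ?_, ?_, ?_⟩
  · -- Fu10
    refine auxMin G1 Fu10 0 (p1 * (1 - cl) / ((1 - p1) * cl))
      ((cu - p1) / (cu * (1 - p1))) (p1 * (1 - cu) / ((1 - p1) * cu))
      (by positivity) (by positivity) hG1m hG1rc hG1b hG1t
      (fun y => by rw [hFu10]; congr 1 <;> ring) ?_ ?_
    · exact min_eq_left (div_nonneg (by linarith) (by positivity))
    · have h2 : (cu - p1) / (cu * (1 - p1)) + p1 * (1 - cu) / ((1 - p1) * cu) = 1 := by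
        field_simp; ring
      have h1 : (1:ℝ) ≤ 0 + p1 * (1 - cl) / ((1 - p1) * cl) := by
        rw [zero_add, le_div_iff₀ (by positivity)]; nlinarith
      rw [h2, min_eq_right (by linarith)]
  · -- Fl10
    refine auxMax G1 Fl10 0 (p1 * (1 - cu) / ((1 - p1) * cu))
      ((cl - p1) / (cl * (1 - p1))) (p1 * (1 - cl) / ((1 - p1) * cl))
      (by positivity) (by positivity) hG1m hG1rc hG1b hG1t
      (fun y => by rw [hFl10]; congr 1 <;> ring) ?_ ?_
    · exact max_eq_left (div_nonpos_iff.mpr (Or.inr ⟨by linarith, by positivity⟩))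
    · have h2 : (cl - p1) / (cl * (1 - p1)) + p1 * (1 - cl) / ((1 - p1) * cl) = 1 := by
        field_simp; ring
      have h1 : 0 + p1 * (1 - cu) / ((1 - p1) * cu) ≤ 1 := by
        rw [zero_add, div_le_one (by positivity)]; nlinarith
      rw [h2, max_eq_right (by linarith)]
  · -- Fu01
    refine auxMin G0 Fu01 0 ((1 - p1) * cu / (p1 * (1 - cu)))
      ((p1 - cl) / ((1 - cl) * p1)) ((1 - p1) * cl / (p1 * (1 - cl)))
      (by positivity) (by positivity) hG0m hG0rc hG0b hG0t
      (fun y => by rw [hFu01]; congr 1 <;> ring) ?_ ?_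
    · exact min_eq_left (div_nonneg (by linarith) (by positivity))
    · have h2 : (p1 - cl) / ((1 - cl) * p1) + (1 - p1) * cl / (p1 * (1 - cl)) = 1 := by
        field_simp; ring
      have h1 : (1:ℝ) ≤ 0 + (1 - p1) * cu / (p1 * (1 - cu)) := by
        rw [zero_add, le_div_iff₀ (by positivity)]; nlinarith
      rw [h2, min_eq_right (by linarith)]
  · -- Fl01
    refine auxMax G0 Fl01 0 ((1 - p1) * cl / (p1 * (1 - cl)))
      ((p1 - cu) / ((1 - cu) * p1)) ((1 - p1) * cu / (p1 * (1 - cu)))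
      (by positivity) (by positivity) hG0m hG0rc hG0b hG0t
      (fun y => by rw [hFl01]; congr 1 <;> ring) ?_ ?_
    · exact max_eq_left (div_nonpos_iff.mpr (Or.inr ⟨by linarith, by positivity⟩))
    · have h2 : (p1 - cu) / ((1 - cu) * p1) + (1 - p1) * cu / (p1 * (1 - cu)) = 1 := by
        field_simp; ring
      have h1 : 0 + (1 - p1) * cl / (p1 * (1 - cl)) ≤ 1 := by
        rw [zero_add, div_le_one (by positivity)]; nlinarith
      rw [h2, max_eq_right (by linarith)]
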